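/- The following classes of structures are definable in SCL under unbounded semantics: (1) the class of connected directed graphs, i.e. graphs (V,E) such that for all vertices u and v ≠ u there is a directed path from u to v (no restriction to finite graphs); concretely the sentence ∀x∀y(x = y ∨ L(Exy ∨ ∃z(Exz ∧ ∃x(x = z ∧ C_L)))) is true in (V,E) iff (V,E) is connected; and (2) the class of well-founded linear order structures; concretely the sentence ∀x L ∀y(¬ y < x ∨ ∀x(¬ x = y ∨ C_L)) is true in a strict linear order (A,<) iff < is well-founded (has no infinite strictly descending sequence). -/

import Mathlib

/-
Common formalization of the logics SCL (static computation logic, unbounded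
game-theoretic semantics) and BndSCL (bounded semantics), following the paper
"First-order logic with self-reference".

* Games are played on arbitrary (possibly infinite) arenas; plays are maximal
  walks; strategies are functions from finite walks (histories) to positions;
  infinite plays, and finite plays ending at a dead end where `win` holds for
  neither player, are won by nobody.
* The semantic games are formalized with positions carrying the current
  (sub)formula, an environment binding each label symbol to the labelled
  formula it most recently named (this is the standard closure rendering of
  "reference formula of a claim-symbol occurrence"), the current assignment
  and the polarity (+ = true, − = false).  The bounded game additionally
  carries a clock value.
-/

set_option autoImplicit false

universe u

/-! ## Generic two-player games on (possibly infinite) arenas -/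

inductive Player : Type
  | eloise : Player
  | abelard : Player
deriving DecidableEq

def Player.opp : Player → Player
  | .eloise => .abelard
  | .abelard => .eloise

/-- A game arena: an ownership function (corresponding to the partition
`V = V₀ ∪ V₁`), an edge relation, and a predicate telling which player (if
any) wins a play ending at a given dead-end position. -/
structure GameArena (P : Type u) where
  turn : P → Player
  edge : P → P → Prop
  win : P → Player → Prop

namespace GameArena

variable {P : Type u} (A : GameArena P)

def DeadEnd (u : P) : Prop := ∀ x, ¬ A.edge u x

/-- `w` is a finite nonempty walk whose first element is `v`. -/
def IsWalkFrom (v : P) (w : List P) : Prop :=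
  w.head? = some v ∧ List.Chain' A.edge w

/-- A finite (maximal) play from `v`: a walk whose last element is a dead end. -/
def IsFinitePlay (v : P) (w : List P) : Prop :=
  A.IsWalkFrom v w ∧ ∀ u, w.getLast? = some u → A.DeadEnd u

/-- An infinite play from `v`. -/
def IsInfPlay (v : P) (f : ℕ → P) : Prop :=
  f 0 = v ∧ ∀ n, A.edge (f n) (f (n + 1))

/-- A strategy (a function from histories to positions) of player `pl` is
legal if it always prescribes a move along an edge whenever a move exists. -/
def LegalFor (pl : Player) (v : P) (σ : List P → P) : Prop :=
  ∀ w u, A.IsWalkFrom v w → w.getLast? = some u → A.turn u = pl →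
    (∃ x, A.edge u x) → A.edge u (σ w)

/-- The strategy `σ` of player `pl` is followed in the finite play `w`. -/
def FollowsFin (pl : Player) (σ : List P → P) (w : List P) : Prop :=
  ∀ q u x, (q ++ [x]) <+: w → q.getLast? = some u → A.turn u = pl → x = σ q

/-- The strategy `σ` of player `pl` is followed in the infinite play `f`. -/
def FollowsInf (pl : Player) (σ : List P → P) (f : ℕ → P) : Prop :=
  ∀ n, A.turn (f n) = pl →
    f (n + 1) = σ (List.ofFn fun i : Fin (n + 1) => f i)

/-- `σ` is a winning strategy of player `pl` from `v`: it is legal, every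
finite maximal play following it ends in a dead end won by `pl`, and no
infinite play follows it (infinite plays are won by neither player). -/
def WinningStrategy (pl : Player) (v : P) (σ : List P → P) : Prop :=
  A.LegalFor pl v σ ∧
  (∀ w, A.IsFinitePlay v w → A.FollowsFin pl σ w →
      ∃ u, w.getLast? = some u ∧ A.win u pl) ∧
  (∀ f, A.IsInfPlay v f → ¬ A.FollowsInf pl σ f)

def HasWinningStrategy (pl : Player) (v : P) : Prop :=
  ∃ σ : List P → P, A.WinningStrategy pl v σ

end GameArena

/-- A positional strategy: its moves depend only on the current position. -/
def Positional {P : Type u} (σ : List P → P) : Prop :=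
  ∀ q q' : List P, q.getLast? = q'.getLast? → σ q = σ q'

/-! ## Syntax of SCL / BndSCL -/

/-- A purely relational vocabulary. -/
structure Vocab : Type 1 where
  Rel : Type
  arity : Rel → ℕ

/-- Formulas of SCL / BndSCL over the vocabulary `V`.  Variables and label
symbols are natural numbers; `claim L` is the claim symbol `C_L` and
`lab L φ` is the labelled formula `L φ`. -/
inductive SCLFormula (V : Vocab) : Type
  | bot : SCLFormula V
  | eq (x y : ℕ) : SCLFormula V
  | rel (R : V.Rel) (args : Fin (V.arity R) → ℕ) : SCLFormula V
  | claim (L : ℕ) : SCLFormula V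
  | not (φ : SCLFormula V) : SCLFormula V
  | and (φ ψ : SCLFormula V) : SCLFormula V
  | or (φ ψ : SCLFormula V) : SCLFormula V
  | ex (x : ℕ) (φ : SCLFormula V) : SCLFormula V
  | all (x : ℕ) (φ : SCLFormula V) : SCLFormula V
  | lab (L : ℕ) (φ : SCLFormula V) : SCLFormula V

namespace SCLFormula

variable {V : Vocab}

/-- First-order atoms. -/
def IsFOAtom : SCLFormula V → Prop
  | .bot => True
  | .eq _ _ => True
  | .rel _ _ => True
  | _ => False

/-- Purely first-order formulas (no claim symbols, no label symbols). -/
def IsFO : SCLFormula V → Prop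
  | .bot => True
  | .eq _ _ => True
  | .rel _ _ => True
  | .claim _ => False
  | .not φ => IsFO φ
  | .and φ ψ => IsFO φ ∧ IsFO ψ
  | .or φ ψ => IsFO φ ∧ IsFO ψ
  | .ex _ φ => IsFO φ
  | .all _ φ => IsFO φ
  | .lab _ _ => False

/-- Free (individual) variables. -/
def freeVars : SCLFormula V → Finset ℕ
  | .bot => ∅
  | .eq x y => {x, y}
  | .rel _ a => Finset.image a Finset.univ
  | .claim _ => ∅
  | .not φ => freeVars φ
  | .and φ ψ => freeVars φ ∪ freeVars ψ
  | .or φ ψ => freeVars φ ∪ freeVars ψ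
  | .ex x φ => freeVars φ \ {x}
  | .all x φ => freeVars φ \ {x}
  | .lab _ φ => freeVars φ

/-- All variables occurring in a formula (free or bound). -/
def vars : SCLFormula V → Finset ℕ
  | .bot => ∅
  | .eq x y => {x, y}
  | .rel _ a => Finset.image a Finset.univ
  | .claim _ => ∅
  | .not φ => vars φ
  | .and φ ψ => vars φ ∪ vars ψ
  | .or φ ψ => vars φ ∪ vars ψ
  | .ex x φ => insert x (vars φ)
  | .all x φ => insert x (vars φ)
  | .lab _ φ => vars φ

/-- Sentences: formulas with no free variables. -/
def IsSentence (φ : SCLFormula V) : Prop := freeVars φ = ∅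

end SCLFormula

/-! ## Structures and first-order (Tarski) satisfaction -/

/-- A (suitable) model for vocabulary `V`: a nonempty domain together with an
interpretation of all relation symbols. -/
structure Struct (V : Vocab) where
  Dom : Type u
  dom_nonempty : Nonempty Dom
  interp : ∀ R : V.Rel, (Fin (V.arity R) → Dom) → Prop

attribute [instance] Struct.dom_nonempty

/-- Satisfaction of atoms (false on non-atoms). -/
def atomSat {V : Vocab} (M : Struct.{u} V) (s : ℕ → M.Dom) : SCLFormula V → Prop
  | .bot => False
  | .eq x y => s x = s y
  | .rel R a => M.interp R fun i => s (a i)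
  | _ => False

/-- Standard (Tarski) first-order satisfaction.  It is only meaningful on
purely first-order formulas; claim symbols are interpreted as `False` and
label symbols are ignored. -/
def FOSat {V : Vocab} (M : Struct.{u} V) : (ℕ → M.Dom) → SCLFormula V → Prop
  | _, .bot => False
  | s, .eq x y => s x = s y
  | s, .rel R a => M.interp R fun i => s (a i)
  | _, .claim _ => False
  | s, .not φ => ¬ FOSat M s φ
  | s, .and φ ψ => FOSat M s φ ∧ FOSat M s ψ
  | s, .or φ ψ => FOSat M s φ ∨ FOSat M s ψ
  | s, .ex x φ => ∃ a : M.Dom, FOSat M (Function.update s x a) φ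
  | s, .all x φ => ∀ a : M.Dom, FOSat M (Function.update s x a) φ
  | s, .lab _ φ => FOSat M s φ

/-! ## The evaluation games -/

/-- A position of the semantic game: the current formula, the environment
recording for each label symbol `L` the reference formula `L ψ` it currently
names, the current assignment, and the polarity (`true` = `+`). -/
structure SCLPos (V : Vocab) (D : Type u) : Type u where
  form : SCLFormula V
  env : ℕ → Option (SCLFormula V)
  asg : ℕ → D
  pol : Bool

/-- Which player moves at a given position. (At positions with at most one
successor the owner is irrelevant; we let Eloise own them.) -/
def posTurn {V : Vocab} {D : Type u} (p : SCLPos V D) : Player :=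
  match p.form, p.pol with
  | .and _ _, true => .abelard
  | .and _ _, false => .eloise
  | .or _ _, true => .eloise
  | .or _ _, false => .abelard
  | .all _ _, true => .abelard
  | .all _ _, false => .eloise
  | .ex _ _, true => .eloise
  | .ex _ _, false => .abelard
  | _, _ => .eloise

/-- Who wins a play ending at a given position: at an FO-atom position,
Eloise wins iff the atom's truth value agrees with the polarity, and Abelard
wins otherwise; plays ending anywhere else (e.g. at a claim symbol with no
reference formula, or with clock value 0) are won by neither player. -/
def posWin {V : Vocab} (M : Struct.{u} V) (p : SCLPos V M.Dom) : Player → Prop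
  | .eloise => p.form.IsFOAtom ∧ (atomSat M p.asg p.form ↔ p.pol = true)
  | .abelard => p.form.IsFOAtom ∧ ¬ (atomSat M p.asg p.form ↔ p.pol = true)

/-- Moves of the unbounded evaluation game `G_∞`. -/
inductive UStep {V : Vocab} (M : Struct.{u} V) :
    SCLPos V M.Dom → SCLPos V M.Dom → Prop
  | neg (φ : SCLFormula V) (e : ℕ → Option (SCLFormula V)) (s : ℕ → M.Dom) (b : Bool) :
      UStep M ⟨.not φ, e, s, b⟩ ⟨φ, e, s, !b⟩
  | andLeft (φ ψ : SCLFormula V) (e : ℕ → Option (SCLFormula V)) (s : ℕ → M.Dom) (b : Bool) :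
      UStep M ⟨.and φ ψ, e, s, b⟩ ⟨φ, e, s, b⟩
  | andRight (φ ψ : SCLFormula V) (e : ℕ → Option (SCLFormula V)) (s : ℕ → M.Dom) (b : Bool) :
      UStep M ⟨.and φ ψ, e, s, b⟩ ⟨ψ, e, s, b⟩
  | orLeft (φ ψ : SCLFormula V) (e : ℕ → Option (SCLFormula V)) (s : ℕ → M.Dom) (b : Bool) :
      UStep M ⟨.or φ ψ, e, s, b⟩ ⟨φ, e, s, b⟩
  | orRight (φ ψ : SCLFormula V) (e : ℕ → Option (SCLFormula V)) (s : ℕ → M.Dom) (b : Bool) :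
      UStep M ⟨.or φ ψ, e, s, b⟩ ⟨ψ, e, s, b⟩
  | exStep (x : ℕ) (φ : SCLFormula V) (e : ℕ → Option (SCLFormula V)) (s : ℕ → M.Dom)
      (b : Bool) (a : M.Dom) :
      UStep M ⟨.ex x φ, e, s, b⟩ ⟨φ, e, Function.update s x a, b⟩
  | allStep (x : ℕ) (φ : SCLFormula V) (e : ℕ → Option (SCLFormula V)) (s : ℕ → M.Dom)
      (b : Bool) (a : M.Dom) :
      UStep M ⟨.all x φ, e, s, b⟩ ⟨φ, e, Function.update s x a, b⟩
  | labStep (L : ℕ) (φ : SCLFormula V) (e : ℕ → Option (SCLFormula V)) (s : ℕ → M.Dom)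
      (b : Bool) :
      UStep M ⟨.lab L φ, e, s, b⟩ ⟨φ, Function.update e L (some (.lab L φ)), s, b⟩
  | claimStep (L : ℕ) (e : ℕ → Option (SCLFormula V)) (s : ℕ → M.Dom) (b : Bool)
      (χ : SCLFormula V) (h : e L = some χ) :
      UStep M ⟨.claim L, e, s, b⟩ ⟨χ, e, s, b⟩

/-- Moves of the `n`-bounded evaluation game: positions additionally carry a
clock value, which decreases by one exactly at jumps from a claim symbol to
its reference formula; a claim-symbol position with clock value `0` is a dead
end won by neither player. -/
inductive BStep {V : Vocab} (M : Struct.{u} V) :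
    SCLPos V M.Dom × ℕ → SCLPos V M.Dom × ℕ → Prop
  | neg (φ : SCLFormula V) (e : ℕ → Option (SCLFormula V)) (s : ℕ → M.Dom) (b : Bool) (n : ℕ) :
      BStep M (⟨.not φ, e, s, b⟩, n) (⟨φ, e, s, !b⟩, n)
  | andLeft (φ ψ : SCLFormula V) (e : ℕ → Option (SCLFormula V)) (s : ℕ → M.Dom) (b : Bool)
      (n : ℕ) : BStep M (⟨.and φ ψ, e, s, b⟩, n) (⟨φ, e, s, b⟩, n)
  | andRight (φ ψ : SCLFormula V) (e : ℕ → Option (SCLFormula V)) (s : ℕ → M.Dom) (b : Bool)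
      (n : ℕ) : BStep M (⟨.and φ ψ, e, s, b⟩, n) (⟨ψ, e, s, b⟩, n)
  | orLeft (φ ψ : SCLFormula V) (e : ℕ → Option (SCLFormula V)) (s : ℕ → M.Dom) (b : Bool)
      (n : ℕ) : BStep M (⟨.or φ ψ, e, s, b⟩, n) (⟨φ, e, s, b⟩, n)
  | orRight (φ ψ : SCLFormula V) (e : ℕ → Option (SCLFormula V)) (s : ℕ → M.Dom) (b : Bool)
      (n : ℕ) : BStep M (⟨.or φ ψ, e, s, b⟩, n) (⟨ψ, e, s, b⟩, n)
  | exStep (x : ℕ) (φ : SCLFormula V) (e : ℕ → Option (SCLFormula V)) (s : ℕ → M.Dom)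
      (b : Bool) (n : ℕ) (a : M.Dom) :
      BStep M (⟨.ex x φ, e, s, b⟩, n) (⟨φ, e, Function.update s x a, b⟩, n)
  | allStep (x : ℕ) (φ : SCLFormula V) (e : ℕ → Option (SCLFormula V)) (s : ℕ → M.Dom)
      (b : Bool) (n : ℕ) (a : M.Dom) :
      BStep M (⟨.all x φ, e, s, b⟩, n) (⟨φ, e, Function.update s x a, b⟩, n)
  | labStep (L : ℕ) (φ : SCLFormula V) (e : ℕ → Option (SCLFormula V)) (s : ℕ → M.Dom)
      (b : Bool) (n : ℕ) :
      BStep M (⟨.lab L φ, e, s, b⟩, n) (⟨φ, Function.update e L (some (.lab L φ)), s, b⟩, n)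
  | claimStep (L : ℕ) (e : ℕ → Option (SCLFormula V)) (s : ℕ → M.Dom) (b : Bool)
      (χ : SCLFormula V) (n : ℕ) (h : e L = some χ) :
      BStep M (⟨.claim L, e, s, b⟩, n + 1) (⟨χ, e, s, b⟩, n)

/-- The unbounded evaluation game `G_∞(𝔄, ·, ·)` as a game arena. -/
def gameU {V : Vocab} (M : Struct.{u} V) : GameArena (SCLPos V M.Dom) where
  turn := posTurn
  edge := UStep M
  win := posWin M

/-- The bounded evaluation games `G_n(𝔄, ·, ·)` (for all clock values `n`
simultaneously) as a game arena. -/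
def gameB {V : Vocab} (M : Struct.{u} V) : GameArena (SCLPos V M.Dom × ℕ) where
  turn p := posTurn p.1
  edge := BStep M
  win p := posWin M p.1

/-- The initial position of the evaluation game for `φ` under assignment `s`:
empty environment and positive polarity. -/
def initPos {V : Vocab} {D : Type u} (φ : SCLFormula V) (s : ℕ → D) : SCLPos V D :=
  ⟨φ, fun _ => none, s, true⟩

/-- Truth under the unbounded semantics (the logic SCL):
`𝔄,s ⊨ φ` iff Eloise has a winning strategy in `G_∞(𝔄,s,φ)`. -/
def SCLTrue {V : Vocab} (M : Struct.{u} V) (s : ℕ → M.Dom) (φ : SCLFormula V) : Prop :=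
  (gameU M).HasWinningStrategy .eloise (initPos φ s)

/-! ### The bounded game `G_ω` -/

/-- Positions of the game `G_ω`: the initial position (where Abelard picks a
number `n'`), the intermediate positions (where Eloise picks some `n ≥ n'`),
and the positions of the `n`-bounded games. -/
inductive GOPos (V : Vocab) (D : Type u) : Type u
  | start : GOPos V D
  | mid (n' : ℕ) : GOPos V D
  | inner (p : SCLPos V D) (clock : ℕ) : GOPos V D

inductive GOStep {V : Vocab} (M : Struct.{u} V) (φ : SCLFormula V) (s : ℕ → M.Dom) :
    GOPos V M.Dom → GOPos V M.Dom → Prop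
  | abelardPick (n' : ℕ) : GOStep M φ s .start (.mid n')
  | eloisePick (n' n : ℕ) (h : n' ≤ n) : GOStep M φ s (.mid n') (.inner (initPos φ s) n)
  | play (p q : SCLPos V M.Dom) (m k : ℕ) (h : BStep M (p, m) (q, k)) :
      GOStep M φ s (.inner p m) (.inner q k)

def goTurn {V : Vocab} {D : Type u} : GOPos V D → Player
  | .start => .abelard
  | .mid _ => .eloise
  | .inner p _ => posTurn p

def goWin {V : Vocab} (M : Struct.{u} V) : GOPos V M.Dom → Player → Prop
  | .inner p _, pl => posWin M p pl
  | _, _ => False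

/-- The bounded evaluation game `G_ω(𝔄,s,φ)`: Abelard picks `n' ∈ ℕ`, then
Eloise picks `n ≥ n'`, and then `G_n(𝔄,s,φ)` is played. -/
def gameOmega {V : Vocab} (M : Struct.{u} V) (φ : SCLFormula V) (s : ℕ → M.Dom) :
    GameArena (GOPos V M.Dom) where
  turn := goTurn
  edge := GOStep M φ s
  win := goWin M

/-- Truth under the bounded semantics (the logic BndSCL):
`𝔄,s ⊨_ω φ` iff Eloise has a winning strategy in `G_ω(𝔄,s,φ)`. -/
def BndTrue {V : Vocab} (M : Struct.{u} V) (s : ℕ → M.Dom) (φ : SCLFormula V) : Prop :=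
  (gameOmega M φ s).HasWinningStrategy .eloise .start

/-! ## Approximants -/

/-- Auxiliary structural recursion for approximants: `k` tells what to put in
place of a claim symbol.  Label symbols are deleted (while updating the
environment), and polarity is tracked through negations. -/
def approxCore {V : Vocab}
    (k : (ℕ → Option (SCLFormula V)) → Bool → ℕ → SCLFormula V) :
    (ℕ → Option (SCLFormula V)) → Bool → SCLFormula V → SCLFormula V
  | _, _, .bot => .bot
  | _, _, .eq x y => .eq x y
  | _, _, .rel R a => .rel R a
  | e, b, .claim L => k e b L
  | e, b, .not φ => .not (approxCore k e (!b) φ)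
  | e, b, .and φ ψ => .and (approxCore k e b φ) (approxCore k e b ψ)
  | e, b, .or φ ψ => .or (approxCore k e b φ) (approxCore k e b ψ)
  | e, b, .ex x φ => .ex x (approxCore k e b φ)
  | e, b, .all x φ => .all x (approxCore k e b φ)
  | e, b, .lab L φ => approxCore k (Function.update e L (some (.lab L φ))) b φ

/-- `approx n e b φ` unfolds each claim symbol of `φ` (in environment `e`,
under polarity `b`) through `n` jumps to reference formulas; claim symbols
reached with exhausted budget (or with no reference formula) are replaced by
`⊥` at positive occurrences and `⊤` (i.e. `¬⊥`) at negative occurrences, and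
all label symbols are deleted. -/
def approx {V : Vocab} : ℕ → (ℕ → Option (SCLFormula V)) → Bool → SCLFormula V → SCLFormula V
  | 0 => approxCore fun _ b _ => if b then .bot else .not .bot
  | n + 1 => approxCore fun e b L =>
      match e L with
      | some χ => approx n e b χ
      | none => if b then .bot else .not .bot

/-- The `n`-th approximant `Φⁿ_φ` of `φ`: the first-order formula obtained
from the `n`-th unfolding of `φ` by deleting all label symbols and replacing
positive claim occurrences by `⊥` and negative ones by `⊤`. -/
def approximant {V : Vocab} (φ : SCLFormula V) (n : ℕ) : SCLFormula V :=
  approx n (fun _ => none) true φ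

/-! ## Directed graphs as structures over one binary relation symbol -/

/-- The vocabulary with a single binary relation symbol. -/
abbrev binVocab : Vocab := ⟨Unit, fun _ => 2⟩

/-- The edge relation of a `binVocab`-structure. -/
def Edge (M : Struct.{u} binVocab) (a b : M.Dom) : Prop :=
  M.interp Unit.unit (fun i => if i.val = 0 then a else b)

/-- The atomic formula `E x y` (for variables `x`, `y`). -/
def Eform (x y : ℕ) : SCLFormula binVocab :=
  .rel Unit.unit (fun i => if i.val = 0 then x else y)

/-- The sentence `∀x∀y(x = y ∨ L(Exy ∨ ∃z(Exz ∧ ∃x(x = z ∧ C_L))))`,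
with `x = 0`, `y = 1`, `z = 2` and label symbol `L = 0`. -/
def phiConn : SCLFormula binVocab :=
  .all 0 (.all 1 (.or (.eq 0 1)
    (.lab 0 (.or (Eform 0 1)
      (.ex 2 (.and (Eform 0 2) (.ex 0 (.and (.eq 0 2) (.claim 0)))))))))

/-- The sentence `∀x L ∀y(¬ y < x ∨ ∀x(¬ x = y ∨ C_L))`, with `x = 0`,
`y = 1` and label symbol `L = 0` (reading the binary relation symbol as `<`). -/
def phiWF : SCLFormula binVocab :=
  .all 0 (.lab 0 (.all 1 (.or (.not (Eform 1 0))
    (.all 0 (.or (.not (.eq 0 1)) (.claim 0))))))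

/-- `M` is connected as a directed graph: for all vertices `u` and `v ≠ u`
there is a directed path from `u` to `v`. -/
def DirConnected (M : Struct.{u} binVocab) : Prop :=
  ∀ u v : M.Dom, u ≠ v →
    ∃ (n : ℕ) (f : ℕ → M.Dom), f 0 = u ∧ f n = v ∧
      ∀ i, i < n → Edge M (f i) (f (i + 1))

/-- The binary relation of `M` is a strict linear order. -/
def IsStrictLinOrder (M : Struct.{u} binVocab) : Prop :=
  (∀ a : M.Dom, ¬ Edge M a a) ∧
  (∀ a b c : M.Dom, Edge M a b → Edge M b c → Edge M a c) ∧
  (∀ a b : M.Dom, a = b ∨ Edge M a b ∨ Edge M b a)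

/-- The order has no infinite strictly descending sequence, i.e. it is
well-founded. -/
def NoDescendingSeq (M : Struct.{u} binVocab) : Prop :=
  ¬ ∃ f : ℕ → M.Dom, ∀ n : ℕ, Edge M (f (n + 1)) (f n)

section Generic

variable {P : Type u}

lemma no_desc {α : Type*} {r : α → α → Prop} (wf : WellFounded r) (g : ℕ → α)
    (h : ∀ n, r (g (n + 1)) (g n)) : False := by
  obtain ⟨a, ⟨n, rfl⟩, hmin⟩ := wf.has_min (Set.range g) ⟨g 0, 0, rfl⟩
  exact hmin (g (n + 1)) ⟨n + 1, rfl⟩ (h n)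

lemma getLast?_ofFn_succ (n : ℕ) (f : ℕ → P) :
    (List.ofFn fun i : Fin (n + 1) => f i).getLast? = some (f n) := by
  rw [List.ofFn_succ']
  simp [List.concat_eq_append, List.getLast?_concat]

/-- Generic sufficient condition for Eloise to have a winning strategy:
an invariant `Good` together with a strictly decreasing measure. -/
theorem GameArena.win_of_inv (A : GameArena P) (v : P)
    {α : Type*} {r : α → α → Prop} (wf : WellFounded r)
    (Good : P → Prop) (μ : P → α) (gnxt : P → P)
    (h0 : Good v)
    (hE : ∀ p, Good p → A.turn p = .eloise → (∃ x, A.edge p x) →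
        A.edge p (gnxt p) ∧ Good (gnxt p) ∧ r (μ (gnxt p)) (μ p))
    (hA : ∀ p q, Good p → A.turn p = .abelard → A.edge p q → Good q ∧ r (μ q) (μ p))
    (hD : ∀ p, Good p → A.DeadEnd p → A.win p .eloise) :
    A.HasWinningStrategy .eloise v := by
  classical
  set step : P → P := fun p =>
    if Good p then gnxt p else if h : ∃ x, A.edge p x then h.choose else p with hstep
  have hstepσ : ∀ (w : List P) (u : P), w.getLast? = some u →
      (fun w => (Option.map step w.getLast?).getD v) w = step u := by
    intro w u h; simp [h]
  refine ⟨fun w => (w.getLast?.map step).getD v, ?_, ?_, ?_⟩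
  · -- legal
    intro w u hw hlast hturn hex
    rw [hstepσ w u hlast]
    by_cases hg : Good u
    · simpa [hstep, hg] using (hE u hg hturn hex).1
    · simp only [hstep, hg, if_false, dif_pos hex]
      exact hex.choose_spec
  · -- finite plays
    intro w hw hf
    have key : ∀ (k : ℕ) (q : List P), q.length = k → q <+: w →
        ∀ u, q.getLast? = some u → Good u := by
      intro k
      induction k using Nat.strong_induction_on with
      | _ k ih =>
        intro q hk hpre u hlastq
        rcases List.eq_nil_or_concat q with rfl | ⟨q', x, rfl⟩
        · simp at hlastq
        rw [List.concat_eq_append] at hpre hlastq hk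
        rw [List.getLast?_concat] at hlastq
        have hux : x = u := by injection hlastq
        subst hux
        rcases List.eq_nil_or_concat q' with rfl | ⟨q'', y, rfl⟩
        · -- x is the head of w, hence v
          have hx : w.head? = some x := by
            rcases hpre with ⟨t, rfl⟩; simp
          rw [hw.1.1] at hx
          have hxv : v = x := by injection hx
          subst hxv
          exact h0
        · rw [List.concat_eq_append] at hpre hk
          have hpre' : q'' ++ [y] <+: w := (List.prefix_append _ _).trans hpre
          have hGy : Good y := ih (q'' ++ [y]).length (by simp [← hk]) _ rfl hpre' y
            (by simp [List.getLast?_concat])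
          have hch : List.Chain' A.edge ((q'' ++ [y]) ++ [x]) := hw.1.2.prefix hpre
          have hedge : A.edge y x := by
            unfold List.Chain' at hch; rw [List.isChain_append] at hch
            exact hch.2.2 y (by simp [List.getLast?_concat]) x (by simp)
          cases hturn : A.turn y with
          | abelard => exact (hA y x hGy hturn hedge).1
          | eloise =>
            have hx : x = step y := by
              rw [hf (q'' ++ [y]) y x hpre (by simp [List.getLast?_concat]) hturn,
                hstepσ _ y (by simp [List.getLast?_concat])]
            rw [hx, hstep]
            simp only [if_pos hGy]
            exact (hE y hGy hturn ⟨x, hedge⟩).2.1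
    have hne : w ≠ [] := by
      intro h; rw [h] at hw; exact (by simpa using hw.1.1)
    obtain ⟨u, hu⟩ : ∃ u, w.getLast? = some u :=
      ⟨w.getLast hne, List.getLast?_eq_getLast hne⟩
    exact ⟨u, hu, hD u (key w.length w rfl (List.prefix_refl w) u hu) (hw.2 u hu)⟩
  · -- no infinite plays
    intro f hinf hfol
    have good : ∀ n, Good (f n) ∧ (A.turn (f n) = .eloise → f (n + 1) = gnxt (f n)) := by
      intro n
      induction n with
      | zero =>
        have hg : Good (f 0) := hinf.1 ▸ h0
        refine ⟨hg, fun ht => ?_⟩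
        rw [hfol 0 ht, hstepσ _ (f 0) (getLast?_ofFn_succ 0 f), hstep]
        simp [if_pos hg]
      | succ n ih =>
        have hg : Good (f (n + 1)) := by
          cases hturn : A.turn (f n) with
          | abelard => exact (hA _ _ ih.1 hturn (hinf.2 n)).1
          | eloise =>
            rw [ih.2 hturn]
            exact (hE _ ih.1 hturn ⟨_, hinf.2 n⟩).2.1
        refine ⟨hg, fun ht => ?_⟩
        rw [hfol (n + 1) ht, hstepσ _ (f (n + 1)) (getLast?_ofFn_succ (n + 1) f), hstep]
        simp [if_pos hg]
    have key : ∀ n, r (μ (f (n + 1))) (μ (f n)) := by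
      intro n
      cases hturn : A.turn (f n) with
      | abelard => exact (hA _ _ (good n).1 hturn (hinf.2 n)).2
      | eloise =>
        rw [(good n).2 hturn]
        exact (hE _ (good n).1 hturn ⟨_, hinf.2 n⟩).2.2
    exact no_desc wf (fun n => μ (f n)) key

end Generic
section Trap

variable {P : Type u}

/-- Generic "trap" lemma: if Eloise has a winning strategy but Abelard can
keep the play inside a set `Bad` of positions, then some dead end in `Bad`
is won by Eloise. -/
theorem GameArena.exists_bad_win (A : GameArena P) (v : P) (σ : List P → P)
    (hw : A.WinningStrategy .eloise v σ)
    (Bad : P → Prop) (anxt : P → P)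
    (h0 : Bad v)
    (hA : ∀ p, Bad p → A.turn p = .abelard → A.edge p (anxt p) ∧ Bad (anxt p))
    (hE : ∀ p q, Bad p → A.turn p = .eloise → A.edge p q → Bad q) :
    ∃ u, Bad u ∧ A.DeadEnd u ∧ A.win u .eloise := by
  classical
  set H : ℕ → List P := fun n => Nat.rec [v]
    (fun _ l => Option.elim l.getLast? l
      (fun p => if A.DeadEnd p then l
        else l ++ [if A.turn p = .abelard then anxt p else σ l])) n with hH
  have H0 : H 0 = [v] := rfl
  have Hsucc : ∀ n, H (n + 1) = Option.elim (H n).getLast? (H n)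
      (fun p => if A.DeadEnd p then H n
        else H n ++ [if A.turn p = .abelard then anxt p else σ (H n)]) := fun n => rfl
  -- basic invariant
  have inv : ∀ n, A.IsWalkFrom v (H n) ∧ ∃ u, (H n).getLast? = some u ∧ Bad u := by
    intro n
    induction n with
    | zero => exact ⟨⟨rfl, List.isChain_singleton v⟩, v, rfl, h0⟩
    | succ n ih =>
      obtain ⟨⟨hhead, hchain⟩, p, hlast, hbad⟩ := ih
      by_cases hd : A.DeadEnd p
      · rw [Hsucc n, hlast]
        simpa [hd] using ⟨⟨hhead, hchain⟩, p, hlast, hbad⟩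
      · set x : P := if A.turn p = .abelard then anxt p else σ (H n) with hx
        have hHn1 : H (n + 1) = H n ++ [x] := by rw [Hsucc n, hlast]; simp [hd, hx]
        have hedge : A.edge p x ∧ Bad x := by
          cases hturn : A.turn p with
          | abelard =>
            have h1 := hA p hbad hturn
            simpa only [hx, hturn, if_pos rfl, if_true] using h1
          | eloise =>
            have hex : ∃ y, A.edge p y := by
              by_contra hne
              push_neg at hne
              exact hd hne
            have hed : A.edge p (σ (H n)) :=
              hw.1 (H n) p ⟨hhead, hchain⟩ hlast hturn hex
            have hxe : x = σ (H n) := by simp [hx, hturn]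
            rw [hxe]
            exact ⟨hed, hE p _ hbad hturn hed⟩
        refine ⟨⟨?_, ?_⟩, x, ?_, hedge.2⟩
        · rw [hHn1]
          cases hln : H n with
          | nil => rw [hln] at hlast; simp at hlast
          | cons a l =>
            rw [hln] at hhead
            simpa using hhead
        · unfold List.Chain'; rw [hHn1, List.isChain_append]
          refine ⟨hchain, by simp, fun a ha b hb => ?_⟩
          rw [hlast] at ha
          simp at ha hb
          rw [← ha, ← hb]
          exact hedge.1
        · rw [hHn1]; simp [List.getLast?_concat]
  -- one-step growth at a non-dead-end
  have step : ∀ m p, (H m).getLast? = some p → ¬ A.DeadEnd p →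
      H (m + 1) = H m ++ [if A.turn p = .abelard then anxt p else σ (H m)] ∧
      A.edge p (if A.turn p = .abelard then anxt p else σ (H m)) := by
    intro m p hlast hd
    refine ⟨by rw [Hsucc m, hlast]; simp [hd], ?_⟩
    cases hturn : A.turn p with
    | abelard =>
      have hbp : Bad p := by
        obtain ⟨u, hu, hb⟩ := (inv m).2
        rw [hlast] at hu
        injection hu with hu
        rw [hu]; exact hb
      simpa only [hturn, if_pos rfl, if_true] using (hA p hbp hturn).1
    | eloise =>
      have hex : ∃ y, A.edge p y := by
        by_contra hne; push_neg at hne; exact hd hne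
      simpa only [hturn, reduceCtorEq, if_false] using hw.1 (H m) p (inv m).1 hlast hturn hex
  have mono : ∀ n, H n <+: H (n + 1) := by
    intro n
    rw [Hsucc n]
    cases hl : (H n).getLast? with
    | none => simp
    | some p =>
      by_cases hd : A.DeadEnd p <;> simp [hd]
  have pref : ∀ m n, m ≤ n → H m <+: H n := by
    intro m n hmn
    induction n with
    | zero => cases Nat.le_zero.mp hmn; exact List.prefix_refl _
    | succ n ih =>
      rcases Nat.lt_or_ge m (n + 1) with h | h
      · exact (ih (Nat.lt_succ_iff.mp h)).trans (mono n)
      · have : m = n + 1 := le_antisymm hmn h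
        rw [this]
  by_cases hstop : ∃ n, ∃ p, (H n).getLast? = some p ∧ A.DeadEnd p
  · -- finite play case
    set n := Nat.find hstop with hn
    obtain ⟨p, hlastp, hdp⟩ := Nat.find_spec hstop
    have hmin : ∀ m, m < n → ¬ ∃ p, (H m).getLast? = some p ∧ A.DeadEnd p :=
      fun m hm => Nat.find_min hstop hm
    have len : ∀ m, m ≤ n → (H m).length = m + 1 := by
      intro m hm
      induction m with
      | zero => simp [H0]
      | succ m ih =>
        obtain ⟨u, hu, _⟩ := (inv m).2
        have hnd : ¬ A.DeadEnd u := fun hd =>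
          hmin m (Nat.lt_of_succ_le hm) ⟨u, hu, hd⟩
        rw [(step m u hu hnd).1]
        simp [ih (Nat.le_of_succ_le hm)]
    have hfol : A.FollowsFin .eloise σ (H n) := by
      intro q u x hpre hlastq hturn
      have hq : q ≠ [] := fun h => by simp [h] at hlastq
      obtain ⟨m, hm⟩ : ∃ m, q.length = m + 1 :=
        ⟨q.length - 1, (Nat.succ_pred_eq_of_pos (List.length_pos_iff.mpr hq)).symm⟩
      have hlen_le : m + 2 ≤ n + 1 := by
        have := hpre.length_le
        rw [len n le_rfl] at this
        simpa [hm] using this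
      have hmn : m < n := by omega
      have hqHm : q = H m := by
        have h1 : q <+: H n := (List.prefix_append q [x]).trans hpre
        have h2 : H m <+: H n := pref m n (le_of_lt hmn)
        have hlm : (H m).length = m + 1 := len m (le_of_lt hmn)
        have := List.prefix_of_prefix_length_le h1 h2 (by rw [hlm, hm])
        exact this.eq_of_length (by rw [hlm, hm])
      have hlastm : (H m).getLast? = some u := hqHm ▸ hlastq
      have hnd : ¬ A.DeadEnd u := fun hd => hmin m hmn ⟨u, hlastm, hd⟩
      obtain ⟨hgrow, _⟩ := step m u hlastm hnd
      have hx : q ++ [x] = H (m + 1) := by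
        have h1 : q ++ [x] <+: H n := hpre
        have h2 : H (m + 1) <+: H n := pref (m + 1) n hmn
        have hlm : (H (m + 1)).length = m + 2 := len (m + 1) hmn
        have := List.prefix_of_prefix_length_le h1 h2 (by simp [hlm, hm])
        exact this.eq_of_length (by simp [hlm, hm])
      rw [hgrow, ← hqHm] at hx
      have := List.append_cancel_left hx
      injection this with h1 _
      rw [h1, hturn]
      simp [hqHm]
    have hfin : A.IsFinitePlay v (H n) := by
      refine ⟨(inv n).1, fun u hu => ?_⟩
      rw [hlastp] at hu
      injection hu with hu
      exact hu ▸ hdp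
    obtain ⟨u', hlast', hwin⟩ := hw.2.1 (H n) hfin hfol
    obtain ⟨ub, hub, hbadb⟩ := (inv n).2
    rw [hlastp] at hlast' hub
    injection hlast' with h1
    injection hub with h2
    exact ⟨p, h2 ▸ hbadb, hdp, h1 ▸ hwin⟩
  · -- infinite play case
    exfalso
    push_neg at hstop
    set f : ℕ → P := fun n => (H n).getLastD v with hf
    have hlastf : ∀ n, (H n).getLast? = some (f n) := by
      intro n
      obtain ⟨u, hu, _⟩ := (inv n).2
      rw [hu, hf]
      simp [List.getLastD_eq_getLast?, hu]
    have hnd : ∀ n, ¬ A.DeadEnd (f n) := fun n => hstop n (f n) (hlastf n)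
    have hgrow : ∀ n, H (n + 1) = H n ++ [f (n + 1)] ∧ A.edge (f n) (f (n + 1)) := by
      intro n
      obtain ⟨h1, h2⟩ := step n (f n) (hlastf n) (hnd n)
      have : f (n + 1) = if A.turn (f n) = .abelard then anxt (f n) else σ (H n) := by
        have := hlastf (n + 1)
        rw [h1, List.getLast?_concat] at this
        injection this with h'
        exact h'.symm
      rw [this]
      exact ⟨h1, h2⟩
    have hofn : ∀ n, H n = List.ofFn (fun i : Fin (n + 1) => f i) := by
      intro n
      induction n with
      | zero =>
        have : f 0 = v := by simp [hf, H0]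
        simp [H0, this, List.ofFn_succ]
      | succ n ih =>
        rw [(hgrow n).1, ih, List.ofFn_succ' (f := fun i : Fin (n + 2) => f i),
          List.concat_eq_append]
        congr 1
    have hinf : A.IsInfPlay v f := ⟨by simp [hf, H0], fun n => (hgrow n).2⟩
    have hfolinf : A.FollowsInf .eloise σ f := by
      intro n hturn
      obtain ⟨h1, -⟩ := step n (f n) (hlastf n) (hnd n)
      have hl := hlastf (n + 1)
      rw [h1, List.getLast?_concat] at hl
      injection hl with h'
      rw [← h']
      simp [hturn, hofn n]
    exact hw.2.2 f hinf hfolinf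

end Trap
section Lex3

def Lex3 : ℕ × ℕ × ℕ → ℕ × ℕ × ℕ → Prop :=
  Prod.Lex (· < ·) (Prod.Lex (· < ·) (· < ·))

lemma lex3_wf : WellFounded Lex3 :=
  WellFounded.prod_lex (Nat.lt_wfRel.wf) (WellFounded.prod_lex Nat.lt_wfRel.wf Nat.lt_wfRel.wf)

lemma lex3_left {a a' b b' c c' : ℕ} (h : a < a') : Lex3 (a, b, c) (a', b', c') :=
  Prod.Lex.left _ _ h

lemma lex3_mid {a b b' c c' : ℕ} (h : b < b') : Lex3 (a, b, c) (a, b', c') :=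
  Prod.Lex.right _ (Prod.Lex.left _ _ h)

lemma lex3_right {a b c c' : ℕ} (h : c < c') : Lex3 (a, b, c) (a, b, c') :=
  Prod.Lex.right _ (Prod.Lex.right _ h)

lemma lex3_mid_le {a b b' c c' : ℕ} (hb : b ≤ b') (h : c < c') :
    Lex3 (a, b, c) (a, b', c') := by
  rcases lt_or_eq_of_le hb with h1 | rfl
  · exact lex3_mid h1
  · exact lex3_right h

end Lex3

section Paths

variable (M : Struct.{u} binVocab)

/-- There is a directed path of length `n` from `w` to `v`. -/
def PathLen (w v : M.Dom) (n : ℕ) : Prop :=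
  ∃ f : ℕ → M.Dom, f 0 = w ∧ f n = v ∧ ∀ i, i < n → Edge M (f i) (f (i + 1))

lemma pathLen_refl (w : M.Dom) : PathLen M w w 0 :=
  ⟨fun _ => w, rfl, rfl, fun i hi => absurd hi (Nat.not_lt_zero i)⟩

lemma pathLen_snoc {w v z : M.Dom} {n : ℕ} (h : PathLen M w v n) (e : Edge M v z) :
    PathLen M w z (n + 1) := by
  obtain ⟨f, h0, hn, hstep⟩ := h
  refine ⟨fun i => if i ≤ n then f i else z, by simp [h0], by simp, fun i hi => ?_⟩
  rcases Nat.lt_or_ge i n with h1 | h1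
  · simp only [if_pos (le_of_lt h1), if_pos (Nat.succ_le_of_lt h1)]
    exact hstep i h1
  · have : i = n := by omega
    subst this
    simp only [if_pos le_rfl, if_neg (by omega : ¬ i + 1 ≤ i), hn]
    exact e

open Classical in
/-- Length of a shortest directed path (0 if there is none). -/
noncomputable def distC (w v : M.Dom) : ℕ :=
  if h : ∃ n, PathLen M w v n then Nat.find h else 0

lemma distC_path {w v : M.Dom} (h : ∃ n, PathLen M w v n) :
    PathLen M w v (distC M w v) := by
  classical
  rw [distC, dif_pos h]
  exact Nat.find_spec h

lemma distC_min {w v : M.Dom} {m : ℕ} (hm : PathLen M w v m) : distC M w v ≤ m := by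
  classical
  rw [distC, dif_pos ⟨m, hm⟩]
  exact Nat.find_min' _ hm

lemma distC_pos {w v : M.Dom} (hne : w ≠ v) (h : ∃ n, PathLen M w v n) :
    0 < distC M w v := by
  rcases Nat.eq_zero_or_pos (distC M w v) with h1 | h1
  · exfalso
    have := distC_path M h
    rw [h1] at this
    obtain ⟨f, hf0, hfn, -⟩ := this
    exact hne (hf0 ▸ hfn ▸ rfl)
  · exact h1

open Classical in
/-- A next vertex on a shortest path towards `v`. -/
noncomputable def znext (w v : M.Dom) : M.Dom :=
  if h : ∃ z, Edge M w z ∧ z ≠ v ∧ distC M z v < distC M w v then h.choose else w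

lemma znext_spec (hconn : DirConnected M) {w v : M.Dom} (hne : w ≠ v)
    (hnedge : ¬ Edge M w v) :
    Edge M w (znext M w v) ∧ znext M w v ≠ v ∧
      distC M (znext M w v) v < distC M w v := by
  classical
  have hex : ∃ n, PathLen M w v n := hconn w v hne
  have key : ∃ z, Edge M w z ∧ z ≠ v ∧ distC M z v < distC M w v := by
    obtain ⟨f, hf0, hfn, hstep⟩ := distC_path M hex
    set d := distC M w v with hd
    have hdpos : 0 < d := distC_pos M hne hex
    refine ⟨f 1, hf0 ▸ hstep 0 hdpos, ?_, ?_⟩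
    · intro hz
      -- then Edge w v
      exact hnedge (by rw [← hz, ← hf0]; exact hstep 0 hdpos)
    · have : PathLen M (f 1) v (d - 1) := by
        refine ⟨fun i => f (i + 1), rfl,
          by show f (d - 1 + 1) = v; rw [Nat.sub_add_cancel hdpos, hfn], fun i hi => ?_⟩
        exact hstep (i + 1) (by omega)
      calc distC M (f 1) v ≤ d - 1 := distC_min M this
        _ < d := by omega
  rw [znext, dif_pos key]
  exact key.choose_spec

lemma wf_edge_of_noDesc (hlin : IsStrictLinOrder M) (h : NoDescendingSeq M) :
    WellFounded (fun a b : M.Dom => Edge M a b) := by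
  haveI : IsIrrefl M.Dom (fun a b : M.Dom => Edge M a b) := ⟨hlin.1⟩
  haveI : IsTrans M.Dom (fun a b : M.Dom => Edge M a b) := ⟨hlin.2.1⟩
  haveI : IsStrictOrder M.Dom (fun a b : M.Dom => Edge M a b) := { }
  rw [RelEmbedding.wellFounded_iff_isEmpty]
  refine ⟨fun f => ?_⟩
  exact h ⟨fun n => f n, fun n => f.map_rel_iff.2 (Nat.lt_succ_self n)⟩

lemma atomSat_Eform (s : ℕ → M.Dom) (x y : ℕ) :
    atomSat M s (Eform x y) ↔ Edge M (s x) (s y) := by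
  show M.interp Unit.unit _ ↔ M.interp Unit.unit _
  constructor <;> intro h <;> convert h using 1 <;>
    · funext i
      by_cases hi : i.val = 0 <;> simp [hi]

end Paths
lemma ab_ne : Player.abelard ≠ Player.eloise := fun h => by cases h

namespace ConnPf

def c8 : SCLFormula binVocab := .and (.eq 0 2) (.claim 0)
def c7 : SCLFormula binVocab := .ex 0 c8
def c6 : SCLFormula binVocab := .and (Eform 0 2) c7
def c5 : SCLFormula binVocab := .ex 2 c6
def c4 : SCLFormula binVocab := .or (Eform 0 1) c5
def c3 : SCLFormula binVocab := .lab 0 c4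
def c2 : SCLFormula binVocab := .or (.eq 0 1) c3
def c1 : SCLFormula binVocab := .all 1 c2
def c0 : SCLFormula binVocab := .all 0 c1

def e0 : ℕ → Option (SCLFormula binVocab) := fun _ => none
def e1 : ℕ → Option (SCLFormula binVocab) := Function.update e0 0 (some c3)

lemma e1_upd : Function.update e1 0 (some c3) = e1 := by simp [e1, Function.update_idem]

variable (M : Struct.{u} binVocab)

inductive GoodC : SCLPos binVocab M.Dom → Prop
  | g0 (s) : GoodC ⟨c0, e0, s, true⟩
  | g1 (s) : GoodC ⟨c1, e0, s, true⟩
  | g2 (s) : GoodC ⟨c2, e0, s, true⟩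
  | g2a (s) (h : s 0 = s 1) : GoodC ⟨.eq 0 1, e0, s, true⟩
  | g3 (e) (s) (he : e = e0 ∨ e = e1) (h : s 0 ≠ s 1) : GoodC ⟨c3, e, s, true⟩
  | g4 (s) (h : s 0 ≠ s 1) : GoodC ⟨c4, e1, s, true⟩
  | g4a (s) (h : Edge M (s 0) (s 1)) : GoodC ⟨Eform 0 1, e1, s, true⟩
  | g5 (s) (h : s 0 ≠ s 1) (h2 : ¬ Edge M (s 0) (s 1)) : GoodC ⟨c5, e1, s, true⟩
  | g6 (s) (h : s 0 ≠ s 1) (h2 : Edge M (s 0) (s 2)) (h3 : s 2 ≠ s 1)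
      (h4 : distC M (s 2) (s 1) < distC M (s 0) (s 1)) : GoodC ⟨c6, e1, s, true⟩
  | g6a (s) (h : Edge M (s 0) (s 2)) : GoodC ⟨Eform 0 2, e1, s, true⟩
  | g7 (s) (h : s 0 ≠ s 1) (h2 : Edge M (s 0) (s 2)) (h3 : s 2 ≠ s 1)
      (h4 : distC M (s 2) (s 1) < distC M (s 0) (s 1)) : GoodC ⟨c7, e1, s, true⟩
  | g8 (s) (h : s 0 = s 2) (h3 : s 2 ≠ s 1) : GoodC ⟨c8, e1, s, true⟩
  | g8a (s) (h : s 0 = s 2) : GoodC ⟨.eq 0 2, e1, s, true⟩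
  | g9 (s) (h : s 0 ≠ s 1) : GoodC ⟨.claim 0, e1, s, true⟩

open Classical in
/-- Measure for the connectivity game. -/
noncomputable def μC : SCLPos binVocab M.Dom → ℕ × ℕ × ℕ := fun p =>
  match p.form with
  | .all 0 _ => (2, 0, 0)
  | .all _ _ => (1, 0, 0)
  | .or (.eq _ _) _ => (0, distC M (p.asg 0) (p.asg 1), 9)
  | .lab _ _ => (0, distC M (p.asg 0) (p.asg 1), 8)
  | .or _ _ => (0, distC M (p.asg 0) (p.asg 1), 7)
  | .ex 2 _ => (0, distC M (p.asg 0) (p.asg 1), 6)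
  | .and (.rel _ _) _ => (0, distC M (p.asg 0) (p.asg 1), 5)
  | .ex _ _ => (0, distC M (p.asg 0) (p.asg 1), 4)
  | .and _ _ => (0, distC M (p.asg 0) (p.asg 1), 12)
  | .claim _ => (0, distC M (p.asg 0) (p.asg 1), 11)
  | _ => (0, 0, 0)

open Classical in
/-- Eloise's positional strategy for the connectivity game. -/
noncomputable def gC : SCLPos binVocab M.Dom → SCLPos binVocab M.Dom := fun p =>
  match p with
  | ⟨.or (.eq x y) ψ, e, s, b⟩ =>
      if s x = s y then ⟨.eq x y, e, s, b⟩ else ⟨ψ, e, s, b⟩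
  | ⟨.or (.rel R a) ψ, e, s, b⟩ =>
      if M.interp R (fun i => s (a i)) then ⟨.rel R a, e, s, b⟩ else ⟨ψ, e, s, b⟩
  | ⟨.lab L φ, e, s, b⟩ => ⟨φ, Function.update e L (some (.lab L φ)), s, b⟩
  | ⟨.claim L, e, s, b⟩ =>
      Option.elim (e L) ⟨.claim L, e, s, b⟩ (fun χ => ⟨χ, e, s, b⟩)
  | ⟨.ex 2 φ, e, s, b⟩ => ⟨φ, e, Function.update s 2 (znext M (s 0) (s 1)), b⟩
  | ⟨.ex x φ, e, s, b⟩ => ⟨φ, e, Function.update s x (s 2), b⟩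
  | q => q

lemma conn_forward (hconn : DirConnected M) (s : ℕ → M.Dom) :
    SCLTrue M s phiConn := by
  classical
  refine (gameU M).win_of_inv _ lex3_wf (GoodC M) (μC M) (gC M) (GoodC.g0 s) ?_ ?_ ?_
  · -- Eloise's moves
    rintro p hg ht hex
    cases hg with
    | g0 s => exact absurd ht ab_ne
    | g1 s => exact absurd ht ab_ne
    | g6 s h h2 h3 h4 => exact absurd ht ab_ne
    | g8 s h h3 => exact absurd ht ab_ne
    | g2a s h => obtain ⟨x, hx⟩ := hex; cases hx
    | g4a s h => obtain ⟨x, hx⟩ := hex; cases hx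
    | g6a s h => obtain ⟨x, hx⟩ := hex; cases hx
    | g8a s h => obtain ⟨x, hx⟩ := hex; cases hx
    | g2 s =>
      have heval : gC M ⟨c2, e0, s, true⟩ =
          if s 0 = s 1 then ⟨.eq 0 1, e0, s, true⟩ else ⟨c3, e0, s, true⟩ := rfl
      rw [heval]
      by_cases hs : s 0 = s 1
      · rw [if_pos hs]
        exact ⟨UStep.orLeft _ _ _ _ _, GoodC.g2a s hs,
          lex3_mid_le (Nat.zero_le _) (by omega)⟩
      · rw [if_neg hs]
        exact ⟨UStep.orRight _ _ _ _ _, GoodC.g3 e0 s (Or.inl rfl) hs,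
          lex3_right (by omega)⟩
    | g3 e s he h =>
      have hGood : GoodC M ⟨c4, Function.update e 0 (some c3), s, true⟩ := by
        rcases he with rfl | rfl
        · exact GoodC.g4 s h
        · rw [e1_upd]; exact GoodC.g4 s h
      exact ⟨UStep.labStep 0 c4 e s true, hGood, lex3_right (by omega)⟩
    | g4 s h =>
      have heval : gC M ⟨c4, e1, s, true⟩ =
          if atomSat M s (Eform 0 1) then ⟨Eform 0 1, e1, s, true⟩
          else ⟨c5, e1, s, true⟩ := rfl
      rw [heval]
      by_cases hs : atomSat M s (Eform 0 1)
      · rw [if_pos hs]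
        exact ⟨UStep.orLeft _ _ _ _ _, GoodC.g4a s ((atomSat_Eform M s 0 1).1 hs),
          lex3_mid_le (Nat.zero_le _) (by omega)⟩
      · rw [if_neg hs]
        exact ⟨UStep.orRight _ _ _ _ _,
          GoodC.g5 s h (fun he => hs ((atomSat_Eform M s 0 1).2 he)),
          lex3_right (by omega)⟩
    | g5 s h h2 =>
      obtain ⟨hz1, hz2, hz3⟩ := znext_spec M hconn h h2
      refine ⟨UStep.exStep 2 c6 e1 s true (znext M (s 0) (s 1)), ?_, ?_⟩
      · exact GoodC.g6 _ h hz1 hz2 hz3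
      · exact lex3_right (by omega)
    | g7 s h h2 h3 h4 =>
      refine ⟨UStep.exStep 0 c8 e1 s true (s 2), ?_, ?_⟩
      · exact GoodC.g8 _ rfl h3
      · exact lex3_mid h4
    | g9 s h =>
      refine ⟨UStep.claimStep 0 e1 s true c3 rfl, GoodC.g3 e1 s (Or.inr rfl) h,
        lex3_right (by omega)⟩
  · -- Abelard's moves
    rintro p q hg ht hq
    cases hg with
    | g0 s => cases hq with
      | allStep _ _ _ _ _ a => exact ⟨GoodC.g1 _, lex3_left (by omega)⟩
    | g1 s => cases hq with
      | allStep _ _ _ _ _ a => exact ⟨GoodC.g2 _, lex3_left (by omega)⟩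
    | g6 s h h2 h3 h4 => cases hq with
      | andLeft => exact ⟨GoodC.g6a s h2, lex3_mid_le (Nat.zero_le _) (by omega)⟩
      | andRight => exact ⟨GoodC.g7 s h h2 h3 h4, lex3_right (by omega)⟩
    | g8 s h h3 => cases hq with
      | andLeft => exact ⟨GoodC.g8a s h, lex3_mid_le (Nat.zero_le _) (by omega)⟩
      | andRight => exact ⟨GoodC.g9 s (h ▸ h3), lex3_right (by omega)⟩
    | g2 s => exact absurd ht (by intro hh; cases hh)
    | g2a s h => exact absurd ht (by intro hh; cases hh)
    | g3 e s he h => exact absurd ht (by intro hh; cases hh)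
    | g4 s h => exact absurd ht (by intro hh; cases hh)
    | g4a s h => exact absurd ht (by intro hh; cases hh)
    | g5 s h h2 => exact absurd ht (by intro hh; cases hh)
    | g6a s h => exact absurd ht (by intro hh; cases hh)
    | g7 s h h2 h3 h4 => exact absurd ht (by intro hh; cases hh)
    | g8a s h => exact absurd ht (by intro hh; cases hh)
    | g9 s h => exact absurd ht (by intro hh; cases hh)
  · -- dead ends
    rintro p hg hdead
    cases hg with
    | g0 s => exact ((hdead _) (UStep.allStep 0 c1 e0 s true (s 0))).elim
    | g1 s => exact ((hdead _) (UStep.allStep 1 c2 e0 s true (s 0))).elim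
    | g2 s => exact ((hdead _) (UStep.orLeft (.eq 0 1) c3 e0 s true)).elim
    | g3 e s he h => exact ((hdead _) (UStep.labStep 0 c4 e s true)).elim
    | g4 s h => exact ((hdead _) (UStep.orLeft (Eform 0 1) c5 e1 s true)).elim
    | g5 s h h2 => exact ((hdead _) (UStep.exStep 2 c6 e1 s true (s 0))).elim
    | g6 s h h2 h3 h4 => exact ((hdead _) (UStep.andLeft (Eform 0 2) c7 e1 s true)).elim
    | g7 s h h2 h3 h4 => exact ((hdead _) (UStep.exStep 0 c8 e1 s true (s 0))).elim
    | g8 s h h3 => exact ((hdead _) (UStep.andLeft (.eq 0 2) (.claim 0) e1 s true)).elim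
    | g9 s h => exact ((hdead _) (UStep.claimStep 0 e1 s true c3 rfl)).elim
    | g2a s h => exact ⟨trivial, iff_of_true h rfl⟩
    | g4a s h => exact ⟨trivial, iff_of_true ((atomSat_Eform M s 0 1).2 h) rfl⟩
    | g6a s h => exact ⟨trivial, iff_of_true ((atomSat_Eform M s 0 2).2 h) rfl⟩
    | g8a s h => exact ⟨trivial, iff_of_true h rfl⟩

end ConnPf
namespace ConnPf

variable (M : Struct.{u} binVocab)

inductive BadC (u0 v0 : M.Dom) : SCLPos binVocab M.Dom → Prop
  | b0 (s) : BadC u0 v0 ⟨c0, e0, s, true⟩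
  | b1 (s) (h0 : s 0 = u0) : BadC u0 v0 ⟨c1, e0, s, true⟩
  | b2 (s) (h0 : s 0 = u0) (h1 : s 1 = v0) : BadC u0 v0 ⟨c2, e0, s, true⟩
  | b2a (s) (h0 : s 0 = u0) (h1 : s 1 = v0) : BadC u0 v0 ⟨.eq 0 1, e0, s, true⟩
  | b3 (e) (s) (he : e = e0 ∨ e = e1) (hr : ∃ n, PathLen M u0 (s 0) n)
      (h1 : s 1 = v0) : BadC u0 v0 ⟨c3, e, s, true⟩
  | b4 (s) (hr : ∃ n, PathLen M u0 (s 0) n) (h1 : s 1 = v0) : BadC u0 v0 ⟨c4, e1, s, true⟩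
  | b4a (s) (hr : ∃ n, PathLen M u0 (s 0) n) (h1 : s 1 = v0) :
      BadC u0 v0 ⟨Eform 0 1, e1, s, true⟩
  | b5 (s) (hr : ∃ n, PathLen M u0 (s 0) n) (h1 : s 1 = v0) : BadC u0 v0 ⟨c5, e1, s, true⟩
  | b6 (s) (hr : ∃ n, PathLen M u0 (s 0) n) (h1 : s 1 = v0) : BadC u0 v0 ⟨c6, e1, s, true⟩
  | b6a (s) (h : ¬ Edge M (s 0) (s 2)) : BadC u0 v0 ⟨Eform 0 2, e1, s, true⟩
  | b7 (s) (hr : ∃ n, PathLen M u0 (s 0) n) (h2 : Edge M (s 0) (s 2)) (h1 : s 1 = v0) :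
      BadC u0 v0 ⟨c7, e1, s, true⟩
  | b8 (s) (hr2 : ∃ n, PathLen M u0 (s 2) n) (h1 : s 1 = v0) : BadC u0 v0 ⟨c8, e1, s, true⟩
  | b8a (s) (h : s 0 ≠ s 2) : BadC u0 v0 ⟨.eq 0 2, e1, s, true⟩
  | b9 (s) (hr : ∃ n, PathLen M u0 (s 0) n) (h1 : s 1 = v0) : BadC u0 v0 ⟨.claim 0, e1, s, true⟩

open Classical in
/-- Abelard's counter-play for the connectivity game. -/
noncomputable def aC (u0 v0 : M.Dom) : SCLPos binVocab M.Dom → SCLPos binVocab M.Dom :=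
  fun p =>
  match p with
  | ⟨.all 0 φ, e, s, b⟩ => ⟨φ, e, Function.update s 0 u0, b⟩
  | ⟨.all 1 φ, e, s, b⟩ => ⟨φ, e, Function.update s 1 v0, b⟩
  | ⟨.and (.rel R a) ψ, e, s, b⟩ =>
      if M.interp R (fun i => s (a i)) then ⟨ψ, e, s, b⟩ else ⟨.rel R a, e, s, b⟩
  | ⟨.and (.eq x y) ψ, e, s, b⟩ =>
      if s x = s y then ⟨ψ, e, s, b⟩ else ⟨.eq x y, e, s, b⟩
  | q => q

lemma conn_backward (hT : ∀ s : ℕ → M.Dom, SCLTrue M s phiConn) : DirConnected M := by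
  classical
  intro u0 v0 hne
  obtain ⟨σ, hσ⟩ := hT (fun _ => u0)
  have hA : ∀ p, BadC M u0 v0 p → (gameU M).turn p = .abelard →
      (gameU M).edge p (aC M u0 v0 p) ∧ BadC M u0 v0 (aC M u0 v0 p) := by
    rintro p hb ht
    cases hb with
    | b0 s =>
      exact ⟨UStep.allStep 0 c1 e0 s true u0, BadC.b1 _ (Function.update_self 0 u0 s)⟩
    | b1 s h0 =>
      refine ⟨UStep.allStep 1 c2 e0 s true v0, BadC.b2 _ ?_ (Function.update_self 1 v0 s)⟩
      simpa [Function.update_apply] using h0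
    | b6 s hr h1 =>
      have heval : aC M u0 v0 ⟨c6, e1, s, true⟩ =
          if atomSat M s (Eform 0 2) then ⟨c7, e1, s, true⟩
          else ⟨Eform 0 2, e1, s, true⟩ := rfl
      rw [heval]
      by_cases hs : atomSat M s (Eform 0 2)
      · rw [if_pos hs]
        exact ⟨UStep.andRight _ _ _ _ _, BadC.b7 s hr ((atomSat_Eform M s 0 2).1 hs) h1⟩
      · rw [if_neg hs]
        exact ⟨UStep.andLeft _ _ _ _ _,
          BadC.b6a s (fun he => hs ((atomSat_Eform M s 0 2).2 he))⟩
    | b8 s hr2 h1 =>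
      have heval : aC M u0 v0 ⟨c8, e1, s, true⟩ =
          if s 0 = s 2 then ⟨.claim 0, e1, s, true⟩
          else ⟨.eq 0 2, e1, s, true⟩ := rfl
      rw [heval]
      by_cases hs : s 0 = s 2
      · rw [if_pos hs]
        refine ⟨UStep.andRight _ _ _ _ _, BadC.b9 s ?_ h1⟩
        rw [hs]; exact hr2
      · rw [if_neg hs]
        exact ⟨UStep.andLeft _ _ _ _ _, BadC.b8a s hs⟩
    | b2 s h0 h1 => exact absurd ht (by intro hh; cases hh)
    | b2a s h0 h1 => exact absurd ht (by intro hh; cases hh)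
    | b3 e s he hr h1 => exact absurd ht (by intro hh; cases hh)
    | b4 s hr h1 => exact absurd ht (by intro hh; cases hh)
    | b4a s hr h1 => exact absurd ht (by intro hh; cases hh)
    | b5 s hr h1 => exact absurd ht (by intro hh; cases hh)
    | b6a s h => exact absurd ht (by intro hh; cases hh)
    | b7 s hr h2 h1 => exact absurd ht (by intro hh; cases hh)
    | b8a s h => exact absurd ht (by intro hh; cases hh)
    | b9 s hr h1 => exact absurd ht (by intro hh; cases hh)
  have hEl : ∀ p q, BadC M u0 v0 p → (gameU M).turn p = .eloise →
      (gameU M).edge p q → BadC M u0 v0 q := by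
    rintro p q hb ht hq
    cases hb with
    | b0 s => exact absurd ht (by intro hh; cases hh)
    | b1 s h0 => exact absurd ht (by intro hh; cases hh)
    | b6 s hr h1 => exact absurd ht (by intro hh; cases hh)
    | b8 s hr2 h1 => exact absurd ht (by intro hh; cases hh)
    | b2a s h0 h1 => cases hq
    | b4a s hr h1 => cases hq
    | b6a s h => cases hq
    | b8a s h => cases hq
    | b2 s h0 h1 =>
      cases hq with
      | orLeft => exact BadC.b2a s h0 h1
      | orRight =>
        refine BadC.b3 e0 s (Or.inl rfl) ⟨0, ?_⟩ h1
        rw [h0]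
        exact pathLen_refl M u0
    | b3 e s he hr h1 =>
      cases hq with
      | labStep =>
        rcases he with rfl | rfl
        · exact BadC.b4 s hr h1
        · show BadC M u0 v0 ⟨c4, Function.update e1 0 (some c3), s, true⟩
          rw [e1_upd]
          exact BadC.b4 s hr h1
    | b4 s hr h1 =>
      cases hq with
      | orLeft => exact BadC.b4a s hr h1
      | orRight => exact BadC.b5 s hr h1
    | b5 s hr h1 =>
      cases hq with
      | exStep _ _ _ _ _ a =>
        refine BadC.b6 _ ?_ ?_
        · simpa [Function.update_apply] using hr
        · simpa [Function.update_apply] using h1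
    | b7 s hr h2 h1 =>
      cases hq with
      | exStep _ _ _ _ _ a =>
        refine BadC.b8 _ ?_ ?_
        · obtain ⟨n, hp⟩ := hr
          have : ∃ n, PathLen M u0 (s 2) n := ⟨n + 1, pathLen_snoc M hp h2⟩
          simpa [Function.update_apply] using this
        · simpa [Function.update_apply] using h1
    | b9 s hr h1 =>
      cases hq with
      | claimStep _ _ _ _ χ h =>
        have h' : some c3 = some χ := h
        injection h' with h'
        subst h'
        exact BadC.b3 e1 s (Or.inr rfl) hr h1
  obtain ⟨p, hbad, hdead, hwin⟩ :=
    (gameU M).exists_bad_win _ σ hσ (BadC M u0 v0) (aC M u0 v0) (BadC.b0 _) hA hEl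
  · -- analyze the final position
    cases hbad with
    | b0 s => exact ((hdead _) (UStep.allStep 0 c1 e0 s true u0)).elim
    | b1 s h0 => exact ((hdead _) (UStep.allStep 1 c2 e0 s true u0)).elim
    | b2 s h0 h1 => exact ((hdead _) (UStep.orLeft (.eq 0 1) c3 e0 s true)).elim
    | b3 e s he hr h1 => exact ((hdead _) (UStep.labStep 0 c4 e s true)).elim
    | b4 s hr h1 => exact ((hdead _) (UStep.orLeft (Eform 0 1) c5 e1 s true)).elim
    | b5 s hr h1 => exact ((hdead _) (UStep.exStep 2 c6 e1 s true u0)).elim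
    | b6 s hr h1 => exact ((hdead _) (UStep.andLeft (Eform 0 2) c7 e1 s true)).elim
    | b7 s hr h2 h1 => exact ((hdead _) (UStep.exStep 0 c8 e1 s true u0)).elim
    | b8 s hr2 h1 => exact ((hdead _) (UStep.andLeft (.eq 0 2) (.claim 0) e1 s true)).elim
    | b9 s hr h1 => exact ((hdead _) (UStep.claimStep 0 e1 s true c3 rfl)).elim
    | b2a s h0 h1 =>
      exfalso
      have : s 0 = s 1 := hwin.2.2 rfl
      rw [h0, h1] at this
      exact hne this
    | b4a s hr h1 =>
      have hE01 : Edge M (s 0) (s 1) := (atomSat_Eform M s 0 1).1 (hwin.2.2 rfl)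
      obtain ⟨n, hp⟩ := hr
      rw [h1] at hE01
      exact ⟨n + 1, pathLen_snoc M hp hE01⟩
    | b6a s h =>
      exact absurd ((atomSat_Eform M s 0 2).1 (hwin.2.2 rfl)) h
    | b8a s h =>
      exact absurd (hwin.2.2 rfl) h

end ConnPf
namespace WFPf

def w5 : SCLFormula binVocab := .or (.not (.eq 0 1)) (.claim 0)
def w4 : SCLFormula binVocab := .all 0 w5
def w3 : SCLFormula binVocab := .or (.not (Eform 1 0)) w4
def w2 : SCLFormula binVocab := .all 1 w3
def lw : SCLFormula binVocab := .lab 0 w2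
def w0 : SCLFormula binVocab := .all 0 lw

def d0 : ℕ → Option (SCLFormula binVocab) := fun _ => none
def eW : ℕ → Option (SCLFormula binVocab) := Function.update d0 0 (some lw)

lemma eW_upd : Function.update eW 0 (some lw) = eW := by simp [eW, Function.update_idem]

variable (M : Struct.{u} binVocab)

/-- Lexicographic measure relation for the well-foundedness game. -/
def LexD : (ℕ × M.Dom × ℕ) → (ℕ × M.Dom × ℕ) → Prop :=
  Prod.Lex (· < ·) (Prod.Lex (fun a b => Edge M a b) (· < ·))

lemma lexD_wf (hlin : IsStrictLinOrder M) (hnd : NoDescendingSeq M) :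
    WellFounded (LexD M) :=
  WellFounded.prod_lex Nat.lt_wfRel.wf
    (WellFounded.prod_lex (wf_edge_of_noDesc M hlin hnd) Nat.lt_wfRel.wf)

lemma lexD_left {a a' : ℕ} {b b' : M.Dom} {c c' : ℕ} (h : a < a') :
    LexD M (a, b, c) (a', b', c') := Prod.Lex.left _ _ h

lemma lexD_mid {a : ℕ} {b b' : M.Dom} {c c' : ℕ} (h : Edge M b b') :
    LexD M (a, b, c) (a, b', c') := Prod.Lex.right _ (Prod.Lex.left _ _ h)

lemma lexD_right {a : ℕ} {b : M.Dom} {c c' : ℕ} (h : c < c') :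
    LexD M (a, b, c) (a, b, c') := Prod.Lex.right _ (Prod.Lex.right _ h)

inductive GoodW : SCLPos binVocab M.Dom → Prop
  | gA (s) : GoodW ⟨w0, d0, s, true⟩
  | gB (e) (s) (he : e = d0 ∨ e = eW) : GoodW ⟨lw, e, s, true⟩
  | gC (s) : GoodW ⟨w2, eW, s, true⟩
  | gD (s) : GoodW ⟨w3, eW, s, true⟩
  | gE (s) (h : ¬ Edge M (s 1) (s 0)) : GoodW ⟨.not (Eform 1 0), eW, s, true⟩
  | gF (s) (h : ¬ Edge M (s 1) (s 0)) : GoodW ⟨Eform 1 0, eW, s, false⟩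
  | gG (s) (h : Edge M (s 1) (s 0)) : GoodW ⟨w4, eW, s, true⟩
  | gH (s) : GoodW ⟨w5, eW, s, true⟩
  | gI (s) (h : s 0 ≠ s 1) : GoodW ⟨.not (.eq 0 1), eW, s, true⟩
  | gJ (s) (h : s 0 ≠ s 1) : GoodW ⟨.eq 0 1, eW, s, false⟩
  | gK (s) (h : s 0 = s 1) : GoodW ⟨.claim 0, eW, s, true⟩

/-- Measure for the well-foundedness game. -/
def μW : SCLPos binVocab M.Dom → ℕ × M.Dom × ℕ := fun p =>
  match p.form with
  | .all 0 (.lab _ _) => (1, p.asg 0, 0)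
  | .lab _ _ => (0, p.asg 0, 8)
  | .all 1 _ => (0, p.asg 0, 7)
  | .or (.not (.rel _ _)) _ => (0, p.asg 0, 6)
  | .not (.rel _ _) => (0, p.asg 0, 5)
  | .rel _ _ => (0, p.asg 0, 4)
  | .all 0 _ => (0, p.asg 1, 12)
  | .or _ _ => (0, p.asg 1, 11)
  | .not _ => (0, p.asg 1, 10)
  | .claim _ => (0, p.asg 1, 10)
  | .eq _ _ => (0, p.asg 1, 9)
  | _ => (0, p.asg 0, 0)

open Classical in
/-- Eloise's positional strategy for the well-foundedness game. -/
noncomputable def gW : SCLPos binVocab M.Dom → SCLPos binVocab M.Dom := fun p =>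
  match p with
  | ⟨.or (.not (.eq x y)) ψ, e, s, b⟩ =>
      if s x = s y then ⟨ψ, e, s, b⟩ else ⟨.not (.eq x y), e, s, b⟩
  | ⟨.or (.not (.rel R a)) ψ, e, s, b⟩ =>
      if M.interp R (fun i => s (a i)) then ⟨ψ, e, s, b⟩ else ⟨.not (.rel R a), e, s, b⟩
  | ⟨.not φ, e, s, b⟩ => ⟨φ, e, s, !b⟩
  | ⟨.lab L φ, e, s, b⟩ => ⟨φ, Function.update e L (some (.lab L φ)), s, b⟩
  | ⟨.claim L, e, s, b⟩ =>
      Option.elim (e L) ⟨.claim L, e, s, b⟩ (fun χ => ⟨χ, e, s, b⟩)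
  | q => q

lemma wf_forward (hlin : IsStrictLinOrder M) (hnd : NoDescendingSeq M)
    (s : ℕ → M.Dom) : SCLTrue M s phiWF := by
  classical
  refine (gameU M).win_of_inv _ (lexD_wf M hlin hnd) (GoodW M) (μW M) (gW M)
    (GoodW.gA s) ?_ ?_ ?_
  · -- Eloise's moves
    rintro p hg ht hex
    cases hg with
    | gA s => exact absurd ht ab_ne
    | gC s => exact absurd ht ab_ne
    | gG s h => exact absurd ht ab_ne
    | gF s h => obtain ⟨x, hx⟩ := hex; cases hx
    | gJ s h => obtain ⟨x, hx⟩ := hex; cases hx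
    | gB e s he =>
      have hGood : GoodW M ⟨w2, Function.update e 0 (some lw), s, true⟩ := by
        rcases he with rfl | rfl
        · exact GoodW.gC s
        · rw [eW_upd]; exact GoodW.gC s
      exact ⟨UStep.labStep 0 w2 e s true, hGood, lexD_right M (by omega)⟩
    | gD s =>
      have heval : gW M ⟨w3, eW, s, true⟩ =
          if atomSat M s (Eform 1 0) then ⟨w4, eW, s, true⟩
          else ⟨.not (Eform 1 0), eW, s, true⟩ := rfl
      rw [heval]
      by_cases hs : atomSat M s (Eform 1 0)
      · rw [if_pos hs]
        refine ⟨UStep.orRight _ _ _ _ _, GoodW.gG s ((atomSat_Eform M s 1 0).1 hs), ?_⟩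
        exact lexD_mid M ((atomSat_Eform M s 1 0).1 hs)
      · rw [if_neg hs]
        exact ⟨UStep.orLeft _ _ _ _ _,
          GoodW.gE s (fun he => hs ((atomSat_Eform M s 1 0).2 he)),
          lexD_right M (by omega)⟩
    | gE s h =>
      exact ⟨UStep.neg (Eform 1 0) eW s true, GoodW.gF s h, lexD_right M (by omega)⟩
    | gH s =>
      have heval : gW M ⟨w5, eW, s, true⟩ =
          if s 0 = s 1 then ⟨.claim 0, eW, s, true⟩
          else ⟨.not (.eq 0 1), eW, s, true⟩ := rfl
      rw [heval]
      by_cases hs : s 0 = s 1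
      · rw [if_pos hs]
        exact ⟨UStep.orRight _ _ _ _ _, GoodW.gK s hs, lexD_right M (by omega)⟩
      · rw [if_neg hs]
        exact ⟨UStep.orLeft _ _ _ _ _, GoodW.gI s hs, lexD_right M (by omega)⟩
    | gI s h =>
      exact ⟨UStep.neg (.eq 0 1) eW s true, GoodW.gJ s h, lexD_right M (by omega)⟩
    | gK s h =>
      refine ⟨UStep.claimStep 0 eW s true lw rfl, GoodW.gB eW s (Or.inr rfl), ?_⟩
      show LexD M (0, s 0, 8) (0, s 1, 10)
      rw [h]
      exact lexD_right M (by omega)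
  · -- Abelard's moves
    rintro p q hg ht hq
    cases hg with
    | gA s => cases hq with
      | allStep _ _ _ _ _ a =>
        exact ⟨GoodW.gB d0 _ (Or.inl rfl), lexD_left M (by omega)⟩
    | gC s => cases hq with
      | allStep _ _ _ _ _ a => exact ⟨GoodW.gD _, lexD_right M (by omega)⟩
    | gG s h => cases hq with
      | allStep _ _ _ _ _ a => exact ⟨GoodW.gH _, lexD_right M (by omega)⟩
    | gB e s he => exact absurd ht (by intro hh; cases hh)
    | gD s => exact absurd ht (by intro hh; cases hh)
    | gE s h => exact absurd ht (by intro hh; cases hh)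
    | gF s h => exact absurd ht (by intro hh; cases hh)
    | gH s => exact absurd ht (by intro hh; cases hh)
    | gI s h => exact absurd ht (by intro hh; cases hh)
    | gJ s h => exact absurd ht (by intro hh; cases hh)
    | gK s h => exact absurd ht (by intro hh; cases hh)
  · -- dead ends
    rintro p hg hdead
    cases hg with
    | gA s => exact ((hdead _) (UStep.allStep 0 lw d0 s true (s 0))).elim
    | gB e s he => exact ((hdead _) (UStep.labStep 0 w2 e s true)).elim
    | gC s => exact ((hdead _) (UStep.allStep 1 w3 eW s true (s 0))).elim
    | gD s => exact ((hdead _) (UStep.orLeft (.not (Eform 1 0)) w4 eW s true)).elim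
    | gE s h => exact ((hdead _) (UStep.neg (Eform 1 0) eW s true)).elim
    | gG s h => exact ((hdead _) (UStep.allStep 0 w5 eW s true (s 0))).elim
    | gH s => exact ((hdead _) (UStep.orLeft (.not (.eq 0 1)) (.claim 0) eW s true)).elim
    | gI s h => exact ((hdead _) (UStep.neg (.eq 0 1) eW s true)).elim
    | gK s h => exact ((hdead _) (UStep.claimStep 0 eW s true lw rfl)).elim
    | gF s h =>
      exact ⟨trivial, iff_of_false (fun ha => h ((atomSat_Eform M s 1 0).1 ha)) (by simp)⟩
    | gJ s h => exact ⟨trivial, iff_of_false h (by simp)⟩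

end WFPf
namespace WFPf

variable (M : Struct.{u} binVocab)

inductive BadW (g : ℕ → M.Dom) : SCLPos binVocab M.Dom → Prop
  | bA (s) : BadW g ⟨w0, d0, s, true⟩
  | bB (e) (s) (he : e = d0 ∨ e = eW) (h : ∃ n, s 0 = g n) : BadW g ⟨lw, e, s, true⟩
  | bC (s) (h : ∃ n, s 0 = g n) : BadW g ⟨w2, eW, s, true⟩
  | bD (s) (hE : Edge M (s 1) (s 0)) (h1 : ∃ n, s 1 = g n) : BadW g ⟨w3, eW, s, true⟩
  | bE (s) (hE : Edge M (s 1) (s 0)) : BadW g ⟨.not (Eform 1 0), eW, s, true⟩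
  | bF (s) (hE : Edge M (s 1) (s 0)) : BadW g ⟨Eform 1 0, eW, s, false⟩
  | bG (s) (h1 : ∃ n, s 1 = g n) : BadW g ⟨w4, eW, s, true⟩
  | bH (s) (h0 : s 0 = s 1) (h1 : ∃ n, s 1 = g n) : BadW g ⟨w5, eW, s, true⟩
  | bI (s) (h0 : s 0 = s 1) : BadW g ⟨.not (.eq 0 1), eW, s, true⟩
  | bJ (s) (h0 : s 0 = s 1) : BadW g ⟨.eq 0 1, eW, s, false⟩
  | bK (s) (h : ∃ n, s 0 = g n) : BadW g ⟨.claim 0, eW, s, true⟩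

open Classical in
/-- Abelard's counter-play along a descending sequence `g`. -/
noncomputable def aW (g : ℕ → M.Dom) : SCLPos binVocab M.Dom → SCLPos binVocab M.Dom :=
  fun p =>
  match p with
  | ⟨.all 0 (.lab L φ), e, s, b⟩ => ⟨.lab L φ, e, Function.update s 0 (g 0), b⟩
  | ⟨.all 1 φ, e, s, b⟩ => ⟨φ, e, Function.update s 1
      (if h : ∃ n, s 0 = g n then g (h.choose + 1) else s 0), b⟩
  | ⟨.all 0 φ, e, s, b⟩ => ⟨φ, e, Function.update s 0 (s 1), b⟩
  | q => q

lemma wf_backward (hT : ∀ s : ℕ → M.Dom, SCLTrue M s phiWF) : NoDescendingSeq M := by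
  classical
  rintro ⟨g, hg⟩
  obtain ⟨σ, hσ⟩ := hT (fun _ => g 0)
  have hA : ∀ p, BadW M g p → (gameU M).turn p = .abelard →
      (gameU M).edge p (aW M g p) ∧ BadW M g (aW M g p) := by
    rintro p hb ht
    cases hb with
    | bA s =>
      refine ⟨UStep.allStep 0 lw d0 s true (g 0), BadW.bB d0 _ (Or.inl rfl) ⟨0, ?_⟩⟩
      simp [Function.update_apply]
    | bC s h =>
      have heval : aW M g ⟨w2, eW, s, true⟩ = ⟨w3, eW, Function.update s 1
          (if h : ∃ n, s 0 = g n then g (h.choose + 1) else s 0), true⟩ := rfl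
      rw [heval, dif_pos h]
      refine ⟨UStep.allStep 1 w3 eW s true _, BadW.bD _ ?_ ?_⟩
      · have hs0 : s 0 = g h.choose := h.choose_spec
        simp only [Function.update_self, Function.update_apply]
        norm_num
        have h2 := hg h.choose
        rwa [← hs0] at h2
      · exact ⟨h.choose + 1, by simp [Function.update_self]⟩
    | bG s h1 =>
      refine ⟨UStep.allStep 0 w5 eW s true (s 1), BadW.bH _ ?_ ?_⟩
      · simp [Function.update_apply]
      · simpa [Function.update_apply] using h1
    | bB e s he h => exact absurd ht (by intro hh; cases hh)
    | bD s hE h1 => exact absurd ht (by intro hh; cases hh)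
    | bE s hE => exact absurd ht (by intro hh; cases hh)
    | bF s hE => exact absurd ht (by intro hh; cases hh)
    | bH s h0 h1 => exact absurd ht (by intro hh; cases hh)
    | bI s h0 => exact absurd ht (by intro hh; cases hh)
    | bJ s h0 => exact absurd ht (by intro hh; cases hh)
    | bK s h => exact absurd ht (by intro hh; cases hh)
  have hEl : ∀ p q, BadW M g p → (gameU M).turn p = .eloise →
      (gameU M).edge p q → BadW M g q := by
    rintro p q hb ht hq
    cases hb with
    | bA s => exact absurd ht (by intro hh; cases hh)
    | bC s h => exact absurd ht (by intro hh; cases hh)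
    | bG s h1 => exact absurd ht (by intro hh; cases hh)
    | bF s hE => cases hq
    | bJ s h0 => cases hq
    | bB e s he h =>
      cases hq with
      | labStep =>
        rcases he with rfl | rfl
        · exact BadW.bC s h
        · show BadW M g ⟨w2, Function.update eW 0 (some lw), s, true⟩
          rw [eW_upd]
          exact BadW.bC s h
    | bD s hE h1 =>
      cases hq with
      | orLeft => exact BadW.bE s hE
      | orRight => exact BadW.bG s h1
    | bE s hE =>
      cases hq with
      | neg => exact BadW.bF s hE
    | bH s h0 h1 =>
      cases hq with
      | orLeft => exact BadW.bI s h0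
      | orRight =>
        refine BadW.bK s ?_
        rw [h0]
        exact h1
    | bI s h0 =>
      cases hq with
      | neg => exact BadW.bJ s h0
    | bK s h =>
      cases hq with
      | claimStep _ _ _ _ χ hc =>
        have hc' : some lw = some χ := hc
        injection hc' with hc'
        subst hc'
        exact BadW.bB eW s (Or.inr rfl) h
  obtain ⟨p, hbad, hdead, hwin⟩ :=
    (gameU M).exists_bad_win _ σ hσ (BadW M g) (aW M g) (BadW.bA _) hA hEl
  cases hbad with
  | bA s => exact (hdead _) (UStep.allStep 0 lw d0 s true (s 0))
  | bB e s he h => exact (hdead _) (UStep.labStep 0 w2 e s true)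
  | bC s h => exact (hdead _) (UStep.allStep 1 w3 eW s true (s 0))
  | bD s hE h1 => exact (hdead _) (UStep.orLeft (.not (Eform 1 0)) w4 eW s true)
  | bE s hE => exact (hdead _) (UStep.neg (Eform 1 0) eW s true)
  | bG s h1 => exact (hdead _) (UStep.allStep 0 w5 eW s true (s 0))
  | bH s h0 h1 => exact (hdead _) (UStep.orLeft (.not (.eq 0 1)) (.claim 0) eW s true)
  | bI s h0 => exact (hdead _) (UStep.neg (.eq 0 1) eW s true)
  | bK s h => exact (hdead _) (UStep.claimStep 0 eW s true lw rfl)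
  | bF s hE =>
    have := hwin.2.1 ((atomSat_Eform M s 1 0).2 hE)
    simp at this
  | bJ s h0 =>
    have := hwin.2.1 h0
    simp at this

end WFPf

/-- Under unbounded semantics, `phiConn` defines the class
of connected directed graphs (with no restriction to finite graphs), and
`phiWF` defines, within the class of strict linear orders, exactly the
well-founded ones. -/
theorem connectedness_and_wellfoundedness_definable_in_SCL :
    (∀ M : Struct.{u} binVocab,
      (∀ s : ℕ → M.Dom, SCLTrue M s phiConn) ↔ DirConnected M) ∧
    (∀ M : Struct.{u} binVocab, IsStrictLinOrder M →
      ((∀ s : ℕ → M.Dom, SCLTrue M s phiWF) ↔ NoDescendingSeq M)) := by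
  constructor
  · intro M
    exact ⟨fun h => ConnPf.conn_backward M h, fun h s => ConnPf.conn_forward M h s⟩
  · intro M hlin
    exact ⟨fun h => WFPf.wf_backward M h, fun h s => WFPf.wf_forward M hlin h s⟩
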